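/- In every orthomodular lattice admitting a strong set of states, the equation ((a→b) → (c→b)) ⊓ (a→c) ⊓ (b→a) ≤ (c→a) holds for all elements a, b, c. (This equation is derived by substitution from the Mayet–Godowski equation corresponding to the condensed state equation abc+de+fg+hj = gb+ec+ja+hfd.) -/

import Mathlib

/-- An ortholattice: a bounded lattice with an orthocomplementation. -/
class Ortholattice (α : Type*) extends Lattice α, BoundedOrder α, Compl α where
  compl_compl : ∀ a : α, aᶜᶜ = a
  compl_le_compl : ∀ a b : α, a ≤ b → bᶜ ≤ aᶜ
  inf_compl_self : ∀ a : α, a ⊓ aᶜ = ⊥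
  sup_compl_self : ∀ a : α, a ⊔ aᶜ = ⊤

/-- The Sasaki hook `a → b := a' ⊔ (a ⊓ b)`. -/
def sasaki {α : Type*} [Ortholattice α] (a b : α) : α := aᶜ ⊔ (a ⊓ b)

/-- A state (probability measure) on an ortholattice. -/
def IsState {α : Type*} [Ortholattice α] (m : α → ℝ) : Prop :=
  (∀ a : α, 0 ≤ m a ∧ m a ≤ 1) ∧ m ⊤ = 1 ∧
    ∀ a b : α, a ≤ bᶜ → m (a ⊔ b) = m a + m b

/-- In every orthomodular lattice admitting a strong set of states,
`((a→b) → (c→b)) ⊓ (a→c) ⊓ (b→a) ≤ c→a` holds. -/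
theorem stmt_16 {α : Type*} [Ortholattice α]
    (hOML : ∀ a b : α, a ≤ b → a ⊔ (aᶜ ⊓ b) = b)
    (S : Set (α → ℝ)) (hne : S.Nonempty) (hS : ∀ m ∈ S, IsState m)
    (hstrong : ∀ a b : α, ∃ m ∈ S, ((m a = 1 → m b = 1) → a ≤ b))
    (a b c : α) :
    sasaki (sasaki a b) (sasaki c b) ⊓ sasaki a c ⊓ sasaki b a ≤ sasaki c a := by
  obtain ⟨m, hmS, hm⟩ := hstrong
    (sasaki (sasaki a b) (sasaki c b) ⊓ sasaki a c ⊓ sasaki b a) (sasaki c a)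
  obtain ⟨hbd, htop, hadd⟩ := hS m hmS
  apply hm
  intro hX
  have hcc : ∀ x : α, xᶜᶜ = x := Ortholattice.compl_compl
  have hcompl : ∀ x : α, m xᶜ = 1 - m x := by
    intro x
    have hx : x ≤ (xᶜ)ᶜ := (hcc x).ge
    have h := hadd x xᶜ hx
    rw [Ortholattice.sup_compl_self, htop] at h
    linarith
  have hmono : ∀ x y : α, x ≤ y → m x ≤ m y := by
    intro x y hxy
    have h1 : x ≤ (xᶜ ⊓ y)ᶜ := by
      have h2 := Ortholattice.compl_le_compl (xᶜ ⊓ y) xᶜ inf_le_left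
      rwa [hcc] at h2
    have h := hadd x (xᶜ ⊓ y) h1
    rw [hOML x y hxy] at h
    have h3 := (hbd (xᶜ ⊓ y)).1
    linarith
  have hsas : ∀ x y : α, m (sasaki x y) = 1 - m x + m (x ⊓ y) := by
    intro x y
    have h1 : xᶜ ≤ (x ⊓ y)ᶜ := by
      have h2 := Ortholattice.compl_le_compl (x ⊓ y) (xᶜ)ᶜ (by rw [hcc]; exact inf_le_left)
      rwa [hcc] at h2
    have h := hadd xᶜ (x ⊓ y) h1
    rw [show (xᶜ ⊔ (x ⊓ y)) = sasaki x y from rfl] at h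
    rw [h, hcompl]
  have hone : ∀ z : α,
      sasaki (sasaki a b) (sasaki c b) ⊓ sasaki a c ⊓ sasaki b a ≤ z → m z = 1 := by
    intro z hz
    have h1 := hmono _ _ hz
    have h2 := (hbd z).2
    linarith
  have h1 : m (sasaki (sasaki a b) (sasaki c b)) = 1 :=
    hone _ (le_trans inf_le_left inf_le_left)
  have h2 : m (sasaki a c) = 1 := hone _ (le_trans inf_le_left inf_le_right)
  have h3 : m (sasaki b a) = 1 := hone _ inf_le_right
  rw [hsas] at h1 h2 h3
  -- from h2 : m (a ⊓ c) = m a ; monotone gives m a ≤ m c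
  have hac : m (a ⊓ c) ≤ m c := hmono _ _ inf_le_right
  have hba : m (b ⊓ a) ≤ m b := hmono _ _ inf_le_left
  -- m (sasaki a b) and m (sasaki c b)
  have hpq : m (sasaki a b ⊓ sasaki c b) ≤ m (sasaki c b) := hmono _ _ inf_le_right
  have hab : (a ⊓ b) = (b ⊓ a) := inf_comm a b
  have hsab := hsas a b
  have hscb := hsas c b
  have hcb : m (c ⊓ b) ≤ m b := hmono _ _ inf_le_right
  -- goal
  rw [hsas]
  have hca : (c ⊓ a) = (a ⊓ c) := inf_comm c a
  rw [hca]
  rw [hab] at hsab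
  linarith
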